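/- Decomposition for the finite-battery two-way channel with α_1, α_2 ∈ [0,1]: the supremum of the sum-throughput over all hard-feasible policies equals the supremum of Σ_{i=1}^{N} R(π_{1,i}, π_{2,i}) over all pairs of sequences (π_{k,i}, ε_{k,i}) with π_{k,i} ≥ 0 and ε_{k,i} ≥ 0 satisfying 0 ≤ Σ_{n=1}^{i} (E_{k,n} + α_j ε_{j,n} − ε_{k,n} − π_{k,n}) ≤ E_k^max for k = 1,2, j ≠ k, and all i = 1,…,N, where R is the per-slot sum-rate function. -/

import Mathlib

/-- The per-slot sum-rate of the two-way channel with energy cooperation. -/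
noncomputable def perSlotRate (h1 h2 s1 s2 a1 a2 : ℝ) (π1 π2 : ℝ) : ℝ :=
  sSup {r : ℝ | ∃ d1 d2 : ℝ, 0 ≤ d1 ∧ d1 ≤ π1 ∧ 0 ≤ d2 ∧ d2 ≤ π2 ∧
    r = 1/2 * Real.log (1 + h1 * (π1 - d1 + a2 * d2) / s2)
      + 1/2 * Real.log (1 + h2 * (π2 - d2 + a1 * d1) / s1)}


lemma aux_log_nonneg (h s x : ℝ) (hh : 0 < h) (hs : 0 < s) (hx : 0 ≤ x) :
    0 ≤ Real.log (1 + h * x / s) :=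
  Real.log_nonneg (by nlinarith [div_nonneg (mul_nonneg hh.le hx) hs.le])

lemma aux_log_mono (h s : ℝ) {x y : ℝ} (hh : 0 < h) (hs : 0 < s) (hx : 0 ≤ x)
    (hxy : x ≤ y) : Real.log (1 + h * x / s) ≤ Real.log (1 + h * y / s) := by
  have h0 : (0:ℝ) < 1 + h * x / s := by positivity
  have h1 : 1 + h * x / s ≤ 1 + h * y / s := by gcongr
  exact Real.log_le_log h0 h1

lemma psr_mem_le (h1 h2 s1 s2 a1 a2 π1 π2 : ℝ)
    (hh1 : 0 < h1) (hh2 : 0 < h2) (hs1 : 0 < s1) (hs2 : 0 < s2)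
    (ha1l : 0 ≤ a1) (ha1u : a1 ≤ 1) (ha2l : 0 ≤ a2) (ha2u : a2 ≤ 1)
    (hπ1 : 0 ≤ π1) (hπ2 : 0 ≤ π2) :
    ∀ r ∈ {r : ℝ | ∃ d1 d2 : ℝ, 0 ≤ d1 ∧ d1 ≤ π1 ∧ 0 ≤ d2 ∧ d2 ≤ π2 ∧
      r = 1/2 * Real.log (1 + h1 * (π1 - d1 + a2 * d2) / s2)
        + 1/2 * Real.log (1 + h2 * (π2 - d2 + a1 * d1) / s1)},
      r ≤ 1/2 * Real.log (1 + h1 * (π1 + π2) / s2)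
        + 1/2 * Real.log (1 + h2 * (π1 + π2) / s1) := by
  rintro r ⟨d1, d2, hd1, hd1', hd2, hd2', rfl⟩
  have b1 : 0 ≤ π1 - d1 + a2 * d2 := by nlinarith [mul_nonneg ha2l hd2]
  have b1' : π1 - d1 + a2 * d2 ≤ π1 + π2 := by
    nlinarith [mul_nonneg (sub_nonneg.mpr ha2u) hd2]
  have b2 : 0 ≤ π2 - d2 + a1 * d1 := by nlinarith [mul_nonneg ha1l hd1]
  have b2' : π2 - d2 + a1 * d1 ≤ π1 + π2 := by
    nlinarith [mul_nonneg (sub_nonneg.mpr ha1u) hd1]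
  have m1 := aux_log_mono h1 s2 hh1 hs2 b1 b1'
  have m2 := aux_log_mono h2 s1 hh2 hs1 b2 b2'
  linarith

lemma psr_bdd (h1 h2 s1 s2 a1 a2 π1 π2 : ℝ)
    (hh1 : 0 < h1) (hh2 : 0 < h2) (hs1 : 0 < s1) (hs2 : 0 < s2)
    (ha1l : 0 ≤ a1) (ha1u : a1 ≤ 1) (ha2l : 0 ≤ a2) (ha2u : a2 ≤ 1)
    (hπ1 : 0 ≤ π1) (hπ2 : 0 ≤ π2) :
    BddAbove {r : ℝ | ∃ d1 d2 : ℝ, 0 ≤ d1 ∧ d1 ≤ π1 ∧ 0 ≤ d2 ∧ d2 ≤ π2 ∧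
      r = 1/2 * Real.log (1 + h1 * (π1 - d1 + a2 * d2) / s2)
        + 1/2 * Real.log (1 + h2 * (π2 - d2 + a1 * d1) / s1)} :=
  ⟨_, psr_mem_le h1 h2 s1 s2 a1 a2 π1 π2 hh1 hh2 hs1 hs2 ha1l ha1u ha2l ha2u hπ1 hπ2⟩

lemma psr_le (h1 h2 s1 s2 a1 a2 π1 π2 : ℝ)
    (hh1 : 0 < h1) (hh2 : 0 < h2) (hs1 : 0 < s1) (hs2 : 0 < s2)
    (ha1l : 0 ≤ a1) (ha1u : a1 ≤ 1) (ha2l : 0 ≤ a2) (ha2u : a2 ≤ 1)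
    (hπ1 : 0 ≤ π1) (hπ2 : 0 ≤ π2) :
    perSlotRate h1 h2 s1 s2 a1 a2 π1 π2
      ≤ 1/2 * Real.log (1 + h1 * (π1 + π2) / s2)
        + 1/2 * Real.log (1 + h2 * (π1 + π2) / s1) := by
  apply Real.sSup_le (psr_mem_le h1 h2 s1 s2 a1 a2 π1 π2 hh1 hh2 hs1 hs2 ha1l ha1u ha2l ha2u hπ1 hπ2)
  have n1 := aux_log_nonneg h1 s2 (π1 + π2) hh1 hs2 (by linarith)
  have n2 := aux_log_nonneg h2 s1 (π1 + π2) hh2 hs1 (by linarith)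
  linarith

lemma psr_ge (h1 h2 s1 s2 a1 a2 π1 π2 : ℝ)
    (hh1 : 0 < h1) (hh2 : 0 < h2) (hs1 : 0 < s1) (hs2 : 0 < s2)
    (ha1l : 0 ≤ a1) (ha1u : a1 ≤ 1) (ha2l : 0 ≤ a2) (ha2u : a2 ≤ 1)
    (hπ1 : 0 ≤ π1) (hπ2 : 0 ≤ π2)
    (d1 d2 : ℝ) (hd1 : 0 ≤ d1) (hd1' : d1 ≤ π1) (hd2 : 0 ≤ d2) (hd2' : d2 ≤ π2) :
    1/2 * Real.log (1 + h1 * (π1 - d1 + a2 * d2) / s2)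
      + 1/2 * Real.log (1 + h2 * (π2 - d2 + a1 * d1) / s1)
      ≤ perSlotRate h1 h2 s1 s2 a1 a2 π1 π2 :=
  le_csSup (psr_bdd h1 h2 s1 s2 a1 a2 π1 π2 hh1 hh2 hs1 hs2 ha1l ha1u ha2l ha2u hπ1 hπ2)
    ⟨d1, d2, hd1, hd1', hd2, hd2', rfl⟩

lemma psr_ge₀ (h1 h2 s1 s2 a1 a2 π1 π2 : ℝ)
    (hh1 : 0 < h1) (hh2 : 0 < h2) (hs1 : 0 < s1) (hs2 : 0 < s2)
    (ha1l : 0 ≤ a1) (ha1u : a1 ≤ 1) (ha2l : 0 ≤ a2) (ha2u : a2 ≤ 1)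
    (hπ1 : 0 ≤ π1) (hπ2 : 0 ≤ π2) :
    1/2 * Real.log (1 + h1 * π1 / s2) + 1/2 * Real.log (1 + h2 * π2 / s1)
      ≤ perSlotRate h1 h2 s1 s2 a1 a2 π1 π2 := by
  have := psr_ge h1 h2 s1 s2 a1 a2 π1 π2 hh1 hh2 hs1 hs2 ha1l ha1u ha2l ha2u hπ1 hπ2
    0 0 le_rfl hπ1 le_rfl hπ2
  simpa using this

lemma psr_nonneg (h1 h2 s1 s2 a1 a2 π1 π2 : ℝ)
    (hh1 : 0 < h1) (hh2 : 0 < h2) (hs1 : 0 < s1) (hs2 : 0 < s2)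
    (ha1l : 0 ≤ a1) (ha1u : a1 ≤ 1) (ha2l : 0 ≤ a2) (ha2u : a2 ≤ 1)
    (hπ1 : 0 ≤ π1) (hπ2 : 0 ≤ π2) :
    0 ≤ perSlotRate h1 h2 s1 s2 a1 a2 π1 π2 := by
  refine le_trans ?_ (psr_ge₀ h1 h2 s1 s2 a1 a2 π1 π2 hh1 hh2 hs1 hs2 ha1l ha1u ha2l ha2u hπ1 hπ2)
  have n1 := aux_log_nonneg h1 s2 π1 hh1 hs2 hπ1
  have n2 := aux_log_nonneg h2 s1 π2 hh2 hs1 hπ2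
  linarith

lemma energy_bound (N : ℕ) (E1 E2 x1 x2 y1 y2 : ℕ → ℝ) (a1 a2 : ℝ)
    (ha1 : a1 ≤ 1) (ha2 : a2 ≤ 1)
    (hE : ∀ i < N, 0 ≤ E1 i ∧ 0 ≤ E2 i)
    (hnn : ∀ i < N, 0 ≤ x1 i ∧ 0 ≤ x2 i ∧ 0 ≤ y1 i ∧ 0 ≤ y2 i)
    (hfe : ∀ i < N, 0 ≤ ∑ n ∈ Finset.range (i+1), (E1 n + a2 * y2 n - y1 n - x1 n)
                 ∧ 0 ≤ ∑ n ∈ Finset.range (i+1), (E2 n + a1 * y1 n - y2 n - x2 n)) :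
    ∀ i < N, x1 i + x2 i ≤ ∑ n ∈ Finset.range N, (E1 n + E2 n) := by
  intro i hi
  have key : ∑ n ∈ Finset.range (i+1), (x1 n + x2 n)
      ≤ ∑ n ∈ Finset.range (i+1), (E1 n + E2 n) := by
    have hA := (hfe i hi).1
    have hB := (hfe i hi).2
    have hsum : ∑ n ∈ Finset.range (i+1),
        ((E1 n + a2 * y2 n - y1 n - x1 n) + (E2 n + a1 * y1 n - y2 n - x2 n))
        ≤ ∑ n ∈ Finset.range (i+1), ((E1 n + E2 n) - (x1 n + x2 n)) := by
      apply Finset.sum_le_sum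
      intro n hn
      have hnN : n < N := lt_of_lt_of_le (Finset.mem_range.mp hn) hi
      obtain ⟨hx1, hx2, hy1, hy2⟩ := hnn n hnN
      nlinarith [mul_nonneg (sub_nonneg.mpr ha1) hy1, mul_nonneg (sub_nonneg.mpr ha2) hy2]
    have e1 : ∑ n ∈ Finset.range (i+1),
        ((E1 n + a2 * y2 n - y1 n - x1 n) + (E2 n + a1 * y1 n - y2 n - x2 n))
        = (∑ n ∈ Finset.range (i+1), (E1 n + a2 * y2 n - y1 n - x1 n))
          + ∑ n ∈ Finset.range (i+1), (E2 n + a1 * y1 n - y2 n - x2 n) :=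
      Finset.sum_add_distrib
    have e2 : ∑ n ∈ Finset.range (i+1), ((E1 n + E2 n) - (x1 n + x2 n))
        = (∑ n ∈ Finset.range (i+1), (E1 n + E2 n))
          - ∑ n ∈ Finset.range (i+1), (x1 n + x2 n) :=
      Finset.sum_sub_distrib _ _
    rw [e1, e2] at hsum
    linarith
  have hsub : ∑ n ∈ Finset.range (i+1), (E1 n + E2 n)
      ≤ ∑ n ∈ Finset.range N, (E1 n + E2 n) := by
    apply Finset.sum_le_sum_of_subset_of_nonneg (Finset.range_subset_range.mpr hi)
    intro n hn _
    have h := hE n (Finset.mem_range.mp hn)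
    linarith [h.1, h.2]
  have hsingle : x1 i + x2 i ≤ ∑ n ∈ Finset.range (i+1), (x1 n + x2 n) := by
    apply Finset.single_le_sum (f := fun n => x1 n + x2 n)
    · intro n hn
      have hnN : n < N := lt_of_lt_of_le (Finset.mem_range.mp hn) hi
      have h := hnn n hnN
      linarith [h.1, h.2.1]
    · exact Finset.self_mem_range_succ i
  linarith

/-- Decomposition for the finite-battery two-way channel: the
optimal sum-throughput over all hard-feasible policies equals the optimum of
the consumed-power / excess-transfer allocation problem with per-slot rates. -/
theorem stmt_15
    (N : ℕ) (E1 E2 : ℕ → ℝ) (Em1 Em2 h1 h2 s1 s2 a1 a2 : ℝ)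
    (hEm1 : 0 < Em1) (hEm2 : 0 < Em2)
    (hh1 : 0 < h1) (hh2 : 0 < h2) (hs1 : 0 < s1) (hs2 : 0 < s2)
    (ha1 : a1 ∈ Set.Icc (0:ℝ) 1) (ha2 : a2 ∈ Set.Icc (0:ℝ) 1)
    (hE : ∀ i < N, 0 ≤ E1 i ∧ 0 ≤ E2 i) :
    sSup {t : ℝ | ∃ p1 p2 d1 d2 : ℕ → ℝ,
        (∀ i < N, 0 ≤ p1 i ∧ 0 ≤ p2 i ∧ 0 ≤ d1 i ∧ 0 ≤ d2 i) ∧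
        (∀ i < N,
          (0 ≤ ∑ n ∈ Finset.range (i+1), (E1 n - p1 n + a2 * d2 n - d1 n) ∧
            ∑ n ∈ Finset.range (i+1), (E1 n - p1 n + a2 * d2 n - d1 n) ≤ Em1) ∧
          (0 ≤ ∑ n ∈ Finset.range (i+1), (E2 n - p2 n + a1 * d1 n - d2 n) ∧
            ∑ n ∈ Finset.range (i+1), (E2 n - p2 n + a1 * d1 n - d2 n) ≤ Em2)) ∧
        t = ∑ i ∈ Finset.range N,
          (1/2 * Real.log (1 + h1 * p1 i / s2)
            + 1/2 * Real.log (1 + h2 * p2 i / s1))}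
    = sSup {t : ℝ | ∃ π1 π2 e1 e2 : ℕ → ℝ,
        (∀ i < N, 0 ≤ π1 i ∧ 0 ≤ π2 i ∧ 0 ≤ e1 i ∧ 0 ≤ e2 i) ∧
        (∀ i < N,
          (0 ≤ ∑ n ∈ Finset.range (i+1), (E1 n + a2 * e2 n - e1 n - π1 n) ∧
            ∑ n ∈ Finset.range (i+1), (E1 n + a2 * e2 n - e1 n - π1 n) ≤ Em1) ∧
          (0 ≤ ∑ n ∈ Finset.range (i+1), (E2 n + a1 * e1 n - e2 n - π2 n) ∧
            ∑ n ∈ Finset.range (i+1), (E2 n + a1 * e1 n - e2 n - π2 n) ≤ Em2)) ∧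
        t = ∑ i ∈ Finset.range N, perSlotRate h1 h2 s1 s2 a1 a2 (π1 i) (π2 i)} := by
  obtain ⟨ha1l, ha1u⟩ := ha1
  obtain ⟨ha2l, ha2u⟩ := ha2
  set SL := {t : ℝ | ∃ p1 p2 d1 d2 : ℕ → ℝ,
        (∀ i < N, 0 ≤ p1 i ∧ 0 ≤ p2 i ∧ 0 ≤ d1 i ∧ 0 ≤ d2 i) ∧
        (∀ i < N,
          (0 ≤ ∑ n ∈ Finset.range (i+1), (E1 n - p1 n + a2 * d2 n - d1 n) ∧
            ∑ n ∈ Finset.range (i+1), (E1 n - p1 n + a2 * d2 n - d1 n) ≤ Em1) ∧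
          (0 ≤ ∑ n ∈ Finset.range (i+1), (E2 n - p2 n + a1 * d1 n - d2 n) ∧
            ∑ n ∈ Finset.range (i+1), (E2 n - p2 n + a1 * d1 n - d2 n) ≤ Em2)) ∧
        t = ∑ i ∈ Finset.range N,
          (1/2 * Real.log (1 + h1 * p1 i / s2)
            + 1/2 * Real.log (1 + h2 * p2 i / s1))} with hSLdef
  set SR := {t : ℝ | ∃ π1 π2 e1 e2 : ℕ → ℝ,
        (∀ i < N, 0 ≤ π1 i ∧ 0 ≤ π2 i ∧ 0 ≤ e1 i ∧ 0 ≤ e2 i) ∧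
        (∀ i < N,
          (0 ≤ ∑ n ∈ Finset.range (i+1), (E1 n + a2 * e2 n - e1 n - π1 n) ∧
            ∑ n ∈ Finset.range (i+1), (E1 n + a2 * e2 n - e1 n - π1 n) ≤ Em1) ∧
          (0 ≤ ∑ n ∈ Finset.range (i+1), (E2 n + a1 * e1 n - e2 n - π2 n) ∧
            ∑ n ∈ Finset.range (i+1), (E2 n + a1 * e1 n - e2 n - π2 n) ≤ Em2)) ∧
        t = ∑ i ∈ Finset.range N, perSlotRate h1 h2 s1 s2 a1 a2 (π1 i) (π2 i)} with hSRdef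
  set C : ℝ := ∑ n ∈ Finset.range N, (E1 n + E2 n) with hCdef
  have hC : 0 ≤ C := by
    apply Finset.sum_nonneg
    intro n hn
    have h := hE n (Finset.mem_range.mp hn)
    linarith [h.1, h.2]
  set B : ℝ := 1/2 * Real.log (1 + h1 * C / s2) + 1/2 * Real.log (1 + h2 * C / s1) with hBdef
  have hB : 0 ≤ B := by
    have n1 := aux_log_nonneg h1 s2 C hh1 hs2 hC
    have n2 := aux_log_nonneg h2 s1 C hh2 hs1 hC
    rw [hBdef]; linarith
  -- bounded above: left set
  have hSLbdd : BddAbove SL := by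
    refine ⟨(N : ℝ) * B, ?_⟩
    rintro t ⟨p1, p2, d1, d2, hnn, hfe, rfl⟩
    have hfe' : ∀ i < N, 0 ≤ ∑ n ∈ Finset.range (i+1), (E1 n + a2 * d2 n - d1 n - p1 n)
        ∧ 0 ≤ ∑ n ∈ Finset.range (i+1), (E2 n + a1 * d1 n - d2 n - p2 n) := by
      intro i hi
      have h := hfe i hi
      constructor
      · have e : ∑ n ∈ Finset.range (i+1), (E1 n + a2 * d2 n - d1 n - p1 n)
            = ∑ n ∈ Finset.range (i+1), (E1 n - p1 n + a2 * d2 n - d1 n) :=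
          Finset.sum_congr rfl (fun n _ => by ring)
        rw [e]; exact h.1.1
      · have e : ∑ n ∈ Finset.range (i+1), (E2 n + a1 * d1 n - d2 n - p2 n)
            = ∑ n ∈ Finset.range (i+1), (E2 n - p2 n + a1 * d1 n - d2 n) :=
          Finset.sum_congr rfl (fun n _ => by ring)
        rw [e]; exact h.2.1
    have hpb := energy_bound N E1 E2 p1 p2 d1 d2 a1 a2 ha1u ha2u hE hnn hfe'
    calc ∑ i ∈ Finset.range N, (1/2 * Real.log (1 + h1 * p1 i / s2)
            + 1/2 * Real.log (1 + h2 * p2 i / s1))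
        ≤ ∑ _i ∈ Finset.range N, B := by
          apply Finset.sum_le_sum
          intro i hi
          have hiN := Finset.mem_range.mp hi
          obtain ⟨hp1, hp2, _, _⟩ := hnn i hiN
          have hle := hpb i hiN
          have m1 := aux_log_mono h1 s2 hh1 hs2 hp1 (show p1 i ≤ C by linarith)
          have m2 := aux_log_mono h2 s1 hh2 hs1 hp2 (show p2 i ≤ C by linarith)
          rw [hBdef]; linarith
      _ = (N : ℝ) * B := by
          rw [Finset.sum_const, Finset.card_range, nsmul_eq_mul]
  -- bounded above: right set
  have hSRbdd : BddAbove SR := by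
    refine ⟨(N : ℝ) * B, ?_⟩
    rintro t ⟨π1, π2, e1, e2, hnn, hfe, rfl⟩
    have hpb := energy_bound N E1 E2 π1 π2 e1 e2 a1 a2 ha1u ha2u hE hnn
      (fun i hi => ⟨(hfe i hi).1.1, (hfe i hi).2.1⟩)
    calc ∑ i ∈ Finset.range N, perSlotRate h1 h2 s1 s2 a1 a2 (π1 i) (π2 i)
        ≤ ∑ _i ∈ Finset.range N, B := by
          apply Finset.sum_le_sum
          intro i hi
          have hiN := Finset.mem_range.mp hi
          obtain ⟨hp1, hp2, _, _⟩ := hnn i hiN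
          have hle := hpb i hiN
          have m0 := psr_le h1 h2 s1 s2 a1 a2 (π1 i) (π2 i) hh1 hh2 hs1 hs2
            ha1l ha1u ha2l ha2u hp1 hp2
          have m1 := aux_log_mono h1 s2 hh1 hs2 (show (0:ℝ) ≤ π1 i + π2 i by linarith)
            (show π1 i + π2 i ≤ C by linarith)
          have m2 := aux_log_mono h2 s1 hh2 hs1 (show (0:ℝ) ≤ π1 i + π2 i by linarith)
            (show π1 i + π2 i ≤ C by linarith)
          rw [hBdef]; linarith
      _ = (N : ℝ) * B := by
          rw [Finset.sum_const, Finset.card_range, nsmul_eq_mul]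
  -- trivial feasible policy: consume harvested energy immediately
  have hzero : ∀ i < N, (0:ℝ) ≤ ∑ n ∈ Finset.range (i+1),
      (E1 n + a2 * (0:ℝ) - 0 - E1 n) ∧ ∑ n ∈ Finset.range (i+1),
      (E1 n + a2 * (0:ℝ) - 0 - E1 n) ≤ Em1 := by
    intro i hi
    simp [hEm1.le]
  have h0SR : 0 ≤ sSup SR := by
    have hmem : (∑ i ∈ Finset.range N, perSlotRate h1 h2 s1 s2 a1 a2 (E1 i) (E2 i)) ∈ SR := by
      refine ⟨E1, E2, fun _ => 0, fun _ => 0, ?_, ?_, rfl⟩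
      · intro i hi
        have h := hE i hi
        exact ⟨h.1, h.2, le_rfl, le_rfl⟩
      · intro i hi
        constructor
        · constructor <;> simp [hEm1.le]
        · constructor <;> simp [hEm2.le]
    refine le_trans ?_ (le_csSup hSRbdd hmem)
    apply Finset.sum_nonneg
    intro i hi
    have h := hE i (Finset.mem_range.mp hi)
    exact psr_nonneg h1 h2 s1 s2 a1 a2 (E1 i) (E2 i) hh1 hh2 hs1 hs2
      ha1l ha1u ha2l ha2u h.1 h.2
  have h0SL : 0 ≤ sSup SL := by
    have hmem : (∑ i ∈ Finset.range N, (1/2 * Real.log (1 + h1 * E1 i / s2)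
        + 1/2 * Real.log (1 + h2 * E2 i / s1))) ∈ SL := by
      refine ⟨E1, E2, fun _ => 0, fun _ => 0, ?_, ?_, rfl⟩
      · intro i hi
        have h := hE i hi
        exact ⟨h.1, h.2, le_rfl, le_rfl⟩
      · intro i hi
        constructor
        · constructor <;> simp [hEm1.le]
        · constructor <;> simp [hEm2.le]
    refine le_trans ?_ (le_csSup hSLbdd hmem)
    apply Finset.sum_nonneg
    intro i hi
    have h := hE i (Finset.mem_range.mp hi)
    have n1 := aux_log_nonneg h1 s2 (E1 i) hh1 hs2 h.1
    have n2 := aux_log_nonneg h2 s1 (E2 i) hh2 hs1 h.2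
    linarith
  apply le_antisymm
  · -- SL ≤ SR
    refine Real.sSup_le ?_ h0SR
    rintro t ⟨p1, p2, d1, d2, hnn, hfe, rfl⟩
    have hmem : (∑ i ∈ Finset.range N, perSlotRate h1 h2 s1 s2 a1 a2 (p1 i) (p2 i)) ∈ SR := by
      refine ⟨p1, p2, d1, d2, hnn, ?_, rfl⟩
      intro i hi
      have h := hfe i hi
      have e1' : ∑ n ∈ Finset.range (i+1), (E1 n + a2 * d2 n - d1 n - p1 n)
          = ∑ n ∈ Finset.range (i+1), (E1 n - p1 n + a2 * d2 n - d1 n) :=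
        Finset.sum_congr rfl (fun n _ => by ring)
      have e2' : ∑ n ∈ Finset.range (i+1), (E2 n + a1 * d1 n - d2 n - p2 n)
          = ∑ n ∈ Finset.range (i+1), (E2 n - p2 n + a1 * d1 n - d2 n) :=
        Finset.sum_congr rfl (fun n _ => by ring)
      rw [e1', e2']
      exact h
    refine le_trans ?_ (le_csSup hSRbdd hmem)
    apply Finset.sum_le_sum
    intro i hi
    have hiN := Finset.mem_range.mp hi
    obtain ⟨hp1, hp2, _, _⟩ := hnn i hiN
    exact psr_ge₀ h1 h2 s1 s2 a1 a2 (p1 i) (p2 i) hh1 hh2 hs1 hs2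
      ha1l ha1u ha2l ha2u hp1 hp2
  · -- SR ≤ SL
    refine Real.sSup_le ?_ h0SL
    rintro t ⟨π1, π2, e1, e2, hnn, hfe, rfl⟩
    refine le_of_forall_pos_le_add ?_
    intro ε hε
    set ε' : ℝ := ε / (N + 1) with hε'def
    have hε' : 0 < ε' := by rw [hε'def]; positivity
    have key : ∀ i : ℕ, ∃ u v : ℝ, 0 ≤ u ∧ 0 ≤ v ∧ (i < N →
        u ≤ π1 i ∧ v ≤ π2 i ∧
        perSlotRate h1 h2 s1 s2 a1 a2 (π1 i) (π2 i)
          ≤ 1/2 * Real.log (1 + h1 * (π1 i - u + a2 * v) / s2)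
            + 1/2 * Real.log (1 + h2 * (π2 i - v + a1 * u) / s1) + ε') := by
      intro i
      by_cases hi : i < N
      · obtain ⟨hπ1i, hπ2i, _, _⟩ := hnn i hi
        have hne : {r : ℝ | ∃ d1 d2 : ℝ, 0 ≤ d1 ∧ d1 ≤ π1 i ∧ 0 ≤ d2 ∧ d2 ≤ π2 i ∧
            r = 1/2 * Real.log (1 + h1 * (π1 i - d1 + a2 * d2) / s2)
              + 1/2 * Real.log (1 + h2 * (π2 i - d2 + a1 * d1) / s1)}.Nonempty :=
          ⟨_, 0, 0, le_rfl, hπ1i, le_rfl, hπ2i, rfl⟩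
        have hlt : perSlotRate h1 h2 s1 s2 a1 a2 (π1 i) (π2 i) - ε'
            < sSup {r : ℝ | ∃ d1 d2 : ℝ, 0 ≤ d1 ∧ d1 ≤ π1 i ∧ 0 ≤ d2 ∧ d2 ≤ π2 i ∧
            r = 1/2 * Real.log (1 + h1 * (π1 i - d1 + a2 * d2) / s2)
              + 1/2 * Real.log (1 + h2 * (π2 i - d2 + a1 * d1) / s1)} := by
          have : sSup {r : ℝ | ∃ d1 d2 : ℝ, 0 ≤ d1 ∧ d1 ≤ π1 i ∧ 0 ≤ d2 ∧ d2 ≤ π2 i ∧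
            r = 1/2 * Real.log (1 + h1 * (π1 i - d1 + a2 * d2) / s2)
              + 1/2 * Real.log (1 + h2 * (π2 i - d2 + a1 * d1) / s1)}
              = perSlotRate h1 h2 s1 s2 a1 a2 (π1 i) (π2 i) := rfl
          rw [this]
          linarith
        obtain ⟨r, hr, hrlt⟩ := exists_lt_of_lt_csSup hne hlt
        obtain ⟨u, v, hu, hu', hv, hv', rfl⟩ := hr
        exact ⟨u, v, hu, hv, fun _ => ⟨hu', hv', by linarith⟩⟩
      · exact ⟨0, 0, le_rfl, le_rfl, fun h => absurd h hi⟩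
    choose δ1 δ2 hδ1 hδ2 hδ using key
    have hmem : (∑ i ∈ Finset.range N,
        (1/2 * Real.log (1 + h1 * (π1 i - δ1 i + a2 * δ2 i) / s2)
          + 1/2 * Real.log (1 + h2 * (π2 i - δ2 i + a1 * δ1 i) / s1))) ∈ SL := by
      refine ⟨fun i => π1 i - δ1 i + a2 * δ2 i, fun i => π2 i - δ2 i + a1 * δ1 i,
        fun i => δ1 i + e1 i, fun i => δ2 i + e2 i, ?_, ?_, rfl⟩
      · intro i hi
        obtain ⟨hπ1i, hπ2i, he1i, he2i⟩ := hnn i hi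
        obtain ⟨hu', hv', _⟩ := hδ i hi
        refine ⟨?_, ?_, ?_, ?_⟩
        · show (0:ℝ) ≤ π1 i - δ1 i + a2 * δ2 i
          nlinarith [mul_nonneg ha2l (hδ2 i)]
        · show (0:ℝ) ≤ π2 i - δ2 i + a1 * δ1 i
          nlinarith [mul_nonneg ha1l (hδ1 i)]
        · show (0:ℝ) ≤ δ1 i + e1 i
          linarith [hδ1 i]
        · show (0:ℝ) ≤ δ2 i + e2 i
          linarith [hδ2 i]
      · intro i hi
        have h := hfe i hi
        have er1 : ∑ n ∈ Finset.range (i+1),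
            (E1 n - (π1 n - δ1 n + a2 * δ2 n) + a2 * (δ2 n + e2 n) - (δ1 n + e1 n))
            = ∑ n ∈ Finset.range (i+1), (E1 n + a2 * e2 n - e1 n - π1 n) :=
          Finset.sum_congr rfl (fun n _ => by ring)
        have er2 : ∑ n ∈ Finset.range (i+1),
            (E2 n - (π2 n - δ2 n + a1 * δ1 n) + a1 * (δ1 n + e1 n) - (δ2 n + e2 n))
            = ∑ n ∈ Finset.range (i+1), (E2 n + a1 * e1 n - e2 n - π2 n) :=
          Finset.sum_congr rfl (fun n _ => by ring)
        exact ⟨⟨by rw [er1]; exact h.1.1, by rw [er1]; exact h.1.2⟩,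
          ⟨by rw [er2]; exact h.2.1, by rw [er2]; exact h.2.2⟩⟩
    have hsum_le : ∑ i ∈ Finset.range N, perSlotRate h1 h2 s1 s2 a1 a2 (π1 i) (π2 i)
        ≤ (∑ i ∈ Finset.range N,
          (1/2 * Real.log (1 + h1 * (π1 i - δ1 i + a2 * δ2 i) / s2)
            + 1/2 * Real.log (1 + h2 * (π2 i - δ2 i + a1 * δ1 i) / s1))) + (N : ℝ) * ε' := by
      have hle : ∀ i ∈ Finset.range N,
          perSlotRate h1 h2 s1 s2 a1 a2 (π1 i) (π2 i)
          ≤ (1/2 * Real.log (1 + h1 * (π1 i - δ1 i + a2 * δ2 i) / s2)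
            + 1/2 * Real.log (1 + h2 * (π2 i - δ2 i + a1 * δ1 i) / s1)) + ε' :=
        fun i hi => by
          have h := (hδ i (Finset.mem_range.mp hi)).2.2
          linarith
      calc ∑ i ∈ Finset.range N, perSlotRate h1 h2 s1 s2 a1 a2 (π1 i) (π2 i)
          ≤ ∑ i ∈ Finset.range N,
            ((1/2 * Real.log (1 + h1 * (π1 i - δ1 i + a2 * δ2 i) / s2)
              + 1/2 * Real.log (1 + h2 * (π2 i - δ2 i + a1 * δ1 i) / s1)) + ε') :=
            Finset.sum_le_sum hle
        _ = (∑ i ∈ Finset.range N,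
            (1/2 * Real.log (1 + h1 * (π1 i - δ1 i + a2 * δ2 i) / s2)
              + 1/2 * Real.log (1 + h2 * (π2 i - δ2 i + a1 * δ1 i) / s1))) + (N : ℝ) * ε' := by
            rw [Finset.sum_add_distrib, Finset.sum_const, Finset.card_range, nsmul_eq_mul]
    have hNε : (N : ℝ) * ε' ≤ ε := by
      rw [hε'def]
      have hpos : (0:ℝ) < (N : ℝ) + 1 := by positivity
      rw [mul_div_assoc']
      rw [div_le_iff₀ hpos]
      nlinarith
    have hfinal := le_csSup hSLbdd hmem
    linarith
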